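/- Let R₀ ⊆ R₁ ⊆ R = ⋃ₖ Rₖ be a filtered ring with R₀ a subring, RᵢRⱼ ⊆ R_{i+j}, and Gr(R) commutative. Suppose the canonical map Sym_{R₀}(R₁/R₀) → Gr(R) is an isomorphism. Then the canonical surjection φ from T_{R₀}(R₁)/J to R is an isomorphism, where T_{R₀}(R₁) is the tensor algebra of the (R₀,R₀)-bimodule R₁ and J is the two-sided ideal generated by the elements a − i(a) for a ∈ R₀ and i(x)⊗i(y) − i(y)⊗i(x) − i([x,y]) for x,y ∈ R₁. -/

import Mathlib

noncomputable section

/-- `word F k l`: the list `l` is a `k`-letter word with letters in `R₁ = F 1`. -/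
def word {R : Type*} [Ring R] (F : ℤ → AddSubgroup R) (k : ℕ) (l : List R) : Prop :=
  l.length = k ∧ ∀ x ∈ l, x ∈ F 1

/-- Formal `ℤ`-linear combinations of words in elements of `R`; words of length `k` with
letters in `R₁` model the degree-`k` part of the tensor algebra `T_{R₀}(R₁)`. -/
abbrev FormalSum (R : Type*) := List R →₀ ℤ

/-- Evaluation of a formal sum of words in `R`: each word goes to the product of its letters. -/
def evalFS (R : Type*) [Ring R] : FormalSum R →+ R :=
  Finsupp.liftAddHom fun l => (zmultiplesHom R) l.prod

/-- The degree-`k` part: formal `ℤ`-combinations of `k`-letter words with letters in `F 1`. -/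
def degreePart {R : Type*} [Ring R] (F : ℤ → AddSubgroup R) (k : ℕ) :
    AddSubgroup (FormalSum R) :=
  AddSubgroup.closure {t | ∃ l, word F k l ∧ t = Finsupp.single l 1}

/-- The "trivial relations" in degree `k`: the kernel of the canonical map from the degree-`k`
words onto `Sym^k_{R₀}(R₁/R₀)`.  It is generated by: words with a letter in `R₀ = F 0`
(these die in `R₁/R₀`), differences of permuted words (symmetry), additivity in one slot,
and moving a coefficient `a ∈ R₀` from one slot to another (`R₀`-multilinearity). -/
def trivialRelations {R : Type*} [Ring R] (F : ℤ → AddSubgroup R) (k : ℕ) :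
    AddSubgroup (FormalSum R) :=
  AddSubgroup.closure
    {t | (∃ l, word F k l ∧ (∃ x ∈ l, x ∈ F 0) ∧ t = Finsupp.single l 1) ∨
      (∃ l l', word F k l ∧ List.Perm l l' ∧
        t = Finsupp.single l 1 - Finsupp.single l' 1) ∨
      (∃ (l₁ l₂ : List R) (x y : R), x ∈ F 1 ∧ y ∈ F 1 ∧
        word F k (l₁ ++ [x + y] ++ l₂) ∧
        t = Finsupp.single (l₁ ++ [x + y] ++ l₂) 1 - Finsupp.single (l₁ ++ [x] ++ l₂) 1 -
          Finsupp.single (l₁ ++ [y] ++ l₂) 1) ∨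
      (∃ (l₁ l₂ l₃ : List R) (a x y : R), a ∈ F 0 ∧ x ∈ F 1 ∧ y ∈ F 1 ∧
        word F k (l₁ ++ [a * x] ++ l₂ ++ [y] ++ l₃) ∧
        t = Finsupp.single (l₁ ++ [a * x] ++ l₂ ++ [y] ++ l₃) 1 -
          Finsupp.single (l₁ ++ [x] ++ l₂ ++ [a * y] ++ l₃) 1)}

set_option linter.unusedSectionVars false

section PBW

variable {R : Type*} [Ring R] {A : Type*} [Ring A]

/-- Apply `g` letterwise to each word and take products. -/
def gword (g : R → A) : FormalSum R →+ A :=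
  Finsupp.liftAddHom fun l => (zmultiplesHom A) (l.map g).prod

lemma evalFS_single (l : List R) (c : ℤ) :
    evalFS R (Finsupp.single l c) = c • l.prod := by
  simp [evalFS, Finsupp.liftAddHom_apply_single]

lemma gword_single (g : R → A) (l : List R) (c : ℤ) :
    gword g (Finsupp.single l c) = c • (l.map g).prod := by
  simp [gword, Finsupp.liftAddHom_apply_single]

/-- `Ok F n t` : every word in `t` has length `≤ n` and letters in `F 1`. -/
def Ok (F : ℤ → AddSubgroup R) (n : ℕ) (t : FormalSum R) : Prop :=
  ∀ l ∈ t.support, l.length ≤ n ∧ ∀ x ∈ l, x ∈ F 1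

lemma Ok.zero (F : ℤ → AddSubgroup R) (n : ℕ) : Ok F n (0 : FormalSum R) := by
  intro l hl; simp at hl

lemma Ok.add {F : ℤ → AddSubgroup R} {n : ℕ} {t t' : FormalSum R}
    (h : Ok F n t) (h' : Ok F n t') : Ok F n (t + t') := by
  classical
  intro l hl
  rcases Finset.mem_union.1 (Finsupp.support_add hl) with h1 | h1
  exacts [h l h1, h' l h1]

lemma Ok.neg {F : ℤ → AddSubgroup R} {n : ℕ} {t : FormalSum R}
    (h : Ok F n t) : Ok F n (-t) := by
  intro l hl; rw [Finsupp.support_neg] at hl; exact h l hl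

lemma Ok.single {F : ℤ → AddSubgroup R} {n : ℕ} {l : List R} {c : ℤ}
    (h1 : l.length ≤ n) (h2 : ∀ x ∈ l, x ∈ F 1) : Ok F n (Finsupp.single l c) := by
  intro m hm
  rcases Finset.mem_singleton.1 (Finsupp.support_single_subset hm) with rfl
  exact ⟨h1, h2⟩

lemma Ok.mono {F : ℤ → AddSubgroup R} {n n' : ℕ} {t : FormalSum R}
    (h : Ok F n t) (hn : n ≤ n') : Ok F n' t :=
  fun l hl => ⟨(h l hl).1.trans hn, (h l hl).2⟩

lemma prod_mem_F {F : ℤ → AddSubgroup R} (hone : (1 : R) ∈ F 0)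
    (hmul : ∀ (i j : ℤ) (x y : R), x ∈ F i → y ∈ F j → x * y ∈ F (i + j)) :
    ∀ l : List R, (∀ x ∈ l, x ∈ F 1) → l.prod ∈ F l.length := by
  intro l
  induction l with
  | nil => intro _; simpa using hone
  | cons x l ih =>
      intro h
      have := hmul 1 l.length x l.prod (h x (by simp)) (ih fun y hy => h y (by simp [hy]))
      simpa [add_comm] using this

lemma eval_mem_F {F : ℤ → AddSubgroup R} (hmono : Monotone F) (hone : (1 : R) ∈ F 0)
    (hmul : ∀ (i j : ℤ) (x y : R), x ∈ F i → y ∈ F j → x * y ∈ F (i + j))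
    (k : ℤ) (t : FormalSum R)
    (h : ∀ l ∈ t.support, (l.length : ℤ) ≤ k ∧ ∀ x ∈ l, x ∈ F 1) :
    evalFS R t ∈ F k := by
  rw [evalFS, Finsupp.liftAddHom_apply]
  refine AddSubgroup.sum_mem _ fun l hl => ?_
  exact AddSubgroup.zsmul_mem _ (hmono (h l hl).1 (prod_mem_F hone hmul l (h l hl).2)) _

/-- `evalFS` of a formal sum with every word wrapped as `p ++ w ++ q`. -/
lemma evalFS_wrap (p q : List R) (u : FormalSum R) :
    evalFS R (Finsupp.mapDomain (fun w => p ++ w ++ q) u)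
      = p.prod * evalFS R u * q.prod := by
  induction u using Finsupp.induction with
  | zero => simp
  | single_add l c u _ _ ih =>
      rw [Finsupp.mapDomain_add, map_add, ih, Finsupp.mapDomain_single, map_add,
        evalFS_single, evalFS_single]
      simp only [List.prod_append, mul_add, add_mul, mul_smul_comm, smul_mul_assoc,
        mul_assoc, zsmul_eq_mul]
      rw [← mul_assoc, (Int.cast_commute c _).eq, mul_assoc]

lemma gword_wrap (g : R → A) (p q : List R) (u : FormalSum R) :
    gword g (Finsupp.mapDomain (fun w => p ++ w ++ q) u)
      = (p.map g).prod * gword g u * (q.map g).prod := by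
  induction u using Finsupp.induction with
  | zero => simp
  | single_add l c u _ _ ih =>
      rw [Finsupp.mapDomain_add, map_add, ih, Finsupp.mapDomain_single, map_add,
        gword_single, gword_single]
      simp only [List.map_append, List.prod_append, mul_add, add_mul, mul_smul_comm,
        smul_mul_assoc, mul_assoc, zsmul_eq_mul]
      rw [← mul_assoc, (Int.cast_commute c _).eq, mul_assoc]

lemma Ok.mapDomain_wrap {F : ℤ → AddSubgroup R} {n : ℕ} {u : FormalSum R} {p q : List R}
    (h : Ok F n u) (hp : ∀ x ∈ p, x ∈ F 1) (hq : ∀ x ∈ q, x ∈ F 1) :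
    Ok F (p.length + n + q.length) (Finsupp.mapDomain (fun w => p ++ w ++ q) u) := by
  classical
  intro l hl
  rcases Finset.mem_image.1 (Finsupp.mapDomain_support hl) with ⟨w, hw, rfl⟩
  constructor
  · simp only [List.length_append]
    have := (h w hw).1
    omega
  · intro x hx
    simp only [List.mem_append] at hx
    rcases hx with (hx | hx) | hx
    exacts [hp x hx, (h w hw).2 x hx, hq x hx]

section G
variable {F : ℤ → AddSubgroup R} {g : R → A}
variable (hadd : ∀ x ∈ F 1, ∀ y ∈ F 1, g (x + y) = g x + g y)

include hadd

/-- `g` as an additive hom on the subgroup `F 1`. -/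
def gHom (hadd : ∀ x ∈ F 1, ∀ y ∈ F 1, g (x + y) = g x + g y) : (F 1) →+ A :=
  AddMonoidHom.mk' (fun u => g u.1) (fun u v => hadd u.1 u.2 v.1 v.2)

lemma g_zero : g 0 = 0 := by
  have := hadd 0 (zero_mem _) 0 (zero_mem _)
  simpa using this.symm

lemma g_zsmul {u : R} (hu : u ∈ F 1) (c : ℤ) : g (c • u) = c • g u := by
  have : g (c • u) = gHom hadd (c • (⟨u, hu⟩ : F 1)) := rfl
  rw [this, map_zsmul]; rfl

lemma g_add_mem {u v : R} (hu : u ∈ F 1) (hv : v ∈ F 1) : g (u + v) = g u + g v :=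
  hadd u hu v hv

/-- Degree ≤ 1 base case: on formal sums of words of length at most one,
`gword g` agrees with `g ∘ evalFS`. -/
lemma base_case (hmono : Monotone F) (hone : (1 : R) ∈ F 0) (hg1 : g 1 = 1)
    (t : FormalSum R) (ht : Ok F 1 t) :
    evalFS R t ∈ F 1 ∧ gword g t = g (evalFS R t) := by
  classical
  induction t using Finsupp.induction with
  | zero => exact ⟨by rw [map_zero]; exact zero_mem _, by rw [map_zero, map_zero, g_zero hadd]⟩
  | single_add l c u hlu hc ih =>
      have hsub : (Finsupp.single l c + u).support = insert l u.support := by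
        rw [Finsupp.support_add_eq, Finsupp.support_single_ne_zero _ hc,
          Finset.insert_eq]
        rw [Finsupp.support_single_ne_zero _ hc]
        simpa using hlu
      have hl : l.length ≤ 1 ∧ ∀ x ∈ l, x ∈ F 1 := ht l (by rw [hsub]; simp)
      have hu : Ok F 1 u := fun m hm => ht m (by rw [hsub]; simp [hm])
      obtain ⟨ih1, ih2⟩ := ih hu
      have hE : evalFS R (Finsupp.single l c) ∈ F 1 ∧
          gword g (Finsupp.single l c) = g (evalFS R (Finsupp.single l c)) := by
        rw [evalFS_single, gword_single]
        rcases l with _ | ⟨x, _ | ⟨y, m⟩⟩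
        · have h1 : (1 : R) ∈ F 1 := hmono (by norm_num) hone
          simp only [List.prod_nil, List.map_nil]
          exact ⟨AddSubgroup.zsmul_mem _ h1 _, by rw [g_zsmul hadd h1]; simp [hg1]⟩
        · have hx : x ∈ F 1 := hl.2 x (by simp)
          simp only [List.prod_cons, List.prod_nil, List.map_cons, List.map_nil, mul_one]
          exact ⟨AddSubgroup.zsmul_mem _ hx _, by rw [g_zsmul hadd hx]⟩
        · exact absurd hl.1 (by simp)
      refine ⟨?_, ?_⟩
      · rw [map_add]; exact add_mem hE.1 ih1
      · rw [map_add, map_add, ih2, hE.2, g_add_mem hadd hE.1 ih1]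

end G

section Reduce
variable {F : ℤ → AddSubgroup R} {g : R → A}

lemma perm_reduce (hmono : Monotone F)
    (hgr : ∀ (i j : ℤ) (x y : R), x ∈ F i → y ∈ F j → x * y - y * x ∈ F (i + j - 1))
    (hcomm : ∀ x ∈ F 1, ∀ y ∈ F 1, g x * g y - g y * g x = g (x * y - y * x))
    {l l' : List R} (hp : l.Perm l') (hletters : ∀ x ∈ l, x ∈ F 1) :
    ∃ s : FormalSum R, (∀ m ∈ s.support, m.length < l.length ∧ ∀ x ∈ m, x ∈ F 1) ∧
      evalFS R s = l.prod - l'.prod ∧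
      gword g s = (l.map g).prod - (l'.map g).prod := by
  classical
  induction hp with
  | nil => exact ⟨0, by simp, by simp, by simp⟩
  | @cons x l₁ l₂ p ih =>
      obtain ⟨s, hs, hE, hG⟩ := ih (fun y hy => hletters y (List.mem_cons_of_mem _ hy))
      have hx : x ∈ F 1 := hletters x List.mem_cons_self
      refine ⟨Finsupp.mapDomain (fun w => [x] ++ w ++ []) s, ?_, ?_, ?_⟩
      · intro m hm
        obtain ⟨w, hw, hmw⟩ := Finset.mem_image.1 (Finsupp.mapDomain_support hm)
        subst hmw
        refine ⟨by simpa using Nat.succ_lt_succ (hs w hw).1, ?_⟩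
        intro y hy
        simp only [List.singleton_append, List.nil_append, List.append_nil, List.mem_cons] at hy
        rcases hy with rfl | hy
        exacts [hx, (hs w hw).2 y hy]
      · rw [evalFS_wrap, hE]; simp [mul_sub]
      · rw [gword_wrap, hG]; simp [mul_sub]
  | swap x y l =>
      have hx : x ∈ F 1 := hletters x (by simp)
      have hy : y ∈ F 1 := hletters y (by simp)
      have hc : y * x - x * y ∈ F 1 := by
        have := hgr 1 1 y x hy hx
        norm_num at this
        exact this
      refine ⟨Finsupp.single ((y * x - x * y) :: l) 1, ?_, ?_, ?_⟩
      · intro m hm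
        rcases Finset.mem_singleton.1 (Finsupp.support_single_subset hm) with rfl
        refine ⟨by simp, ?_⟩
        intro z hz
        rcases List.mem_cons.1 hz with rfl | hz
        exacts [hc, hletters z (by simp [hz])]
      · rw [evalFS_single]
        simp only [one_zsmul, List.prod_cons]
        noncomm_ring
      · rw [gword_single]
        simp only [one_zsmul, List.map_cons, List.prod_cons]
        rw [← hcomm y hy x hx]
        noncomm_ring
  | @trans l₁ l₂ l₃ p₁ p₂ ih₁ ih₂ =>
      obtain ⟨s₁, hs₁, hE₁, hG₁⟩ := ih₁ hletters
      have hl₂ : ∀ x ∈ l₂, x ∈ F 1 := fun y hy => hletters y (p₁.symm.subset hy)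
      obtain ⟨s₂, hs₂, hE₂, hG₂⟩ := ih₂ hl₂
      refine ⟨s₁ + s₂, ?_, ?_, ?_⟩
      · intro m hm
        rcases Finset.mem_union.1 (Finsupp.support_add hm) with h1 | h1
        · exact hs₁ m h1
        · exact ⟨p₁.length_eq ▸ (hs₂ m h1).1, (hs₂ m h1).2⟩
      · rw [map_add, hE₁, hE₂]; abel
      · rw [map_add, hG₁, hG₂]; abel

lemma move_absorb (hmono : Monotone F)
    (hmul : ∀ (i j : ℤ) (x y : R), x ∈ F i → y ∈ F j → x * y ∈ F (i + j))
    (hgr : ∀ (i j : ℤ) (x y : R), x ∈ F i → y ∈ F j → x * y - y * x ∈ F (i + j - 1))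
    (hcomm : ∀ x ∈ F 1, ∀ y ∈ F 1, g x * g y - g y * g x = g (x * y - y * x))
    (hmul0 : ∀ a ∈ F 0, ∀ x ∈ F 1, g (a * x) = g a * g x ∧ g (x * a) = g x * g a)
    {a y : R} (ha : a ∈ F 0) (hy : y ∈ F 1) :
    ∀ m : List R, (∀ x ∈ m, x ∈ F 1) →
    ∃ s : FormalSum R, Ok F m.length s ∧
      evalFS R s = a * m.prod * y - m.prod * (a * y) ∧
      gword g s = g a * (m.map g).prod * g y - (m.map g).prod * (g a * g y) := by
  classical
  intro m
  induction m with
  | nil => exact fun _ => ⟨0, Ok.zero F 0, by simp, by simp⟩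
  | cons z m ih =>
      intro hm
      obtain ⟨s, hs, hE, hG⟩ := ih (fun x hx => hm x (List.mem_cons_of_mem _ hx))
      have hz : z ∈ F 1 := hm z List.mem_cons_self
      have ha1 : a ∈ F 1 := hmono (by norm_num) ha
      have hc0 : a * z - z * a ∈ F 0 := by
        have := hgr 0 1 a z ha hz
        norm_num at this
        exact this
      have hgc : g a * g z - g z * g a = g (a * z - z * a) :=
        hcomm a ha1 z hz
      -- the second (correction) term, with the `F 0` letter absorbed into the next letter
      obtain ⟨w, hw, hEw, hGw⟩ :
          ∃ w : List R, (w.length = m.length + 1 ∧ ∀ x ∈ w, x ∈ F 1) ∧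
            w.prod = (a * z - z * a) * m.prod * y ∧
            (w.map g).prod = g (a * z - z * a) * (m.map g).prod * g y := by
        rcases m with _ | ⟨v, m'⟩
        · refine ⟨[(a * z - z * a) * y], ⟨by simp, ?_⟩, by simp, ?_⟩
          · intro x hx
            rcases List.mem_singleton.1 hx with rfl
            have := hmul 0 1 _ _ hc0 hy
            norm_num at this
            exact this
          · simp [(hmul0 _ hc0 _ hy).1]
        · refine ⟨((a * z - z * a) * v) :: m' ++ [y], ⟨by simp, ?_⟩, ?_, ?_⟩
          · intro x hx
            simp only [List.cons_append, List.mem_cons, List.mem_append,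
              List.mem_singleton, List.not_mem_nil, or_false] at hx
            rcases hx with rfl | hx | rfl
            · have := hmul 0 1 _ _ hc0 (hm v (by simp))
              norm_num at this
              exact this
            · exact hm x (by simp [hx])
            · exact hy
          · simp only [List.cons_append, List.prod_cons, List.prod_append,
              List.prod_nil, mul_one]
            noncomm_ring
          · have hgv := (hmul0 _ hc0 _ (hm v (by simp))).1
            simp only [List.cons_append, List.map_cons, List.map_append, List.map_nil,
              List.prod_cons, List.prod_append, List.prod_nil, mul_one, hgv]
            noncomm_ring
      refine ⟨Finsupp.mapDomain (fun u => [z] ++ u ++ []) s + Finsupp.single w 1, ?_, ?_, ?_⟩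
      · refine Ok.add ?_ ?_
        · have := Ok.mapDomain_wrap hs (p := [z]) (q := [])
            (by intro x hx; rcases List.mem_singleton.1 hx with rfl; exact hz) (by simp)
          exact this.mono
            (by simp only [List.length_singleton, List.length_nil, List.length_cons]; omega)
        · exact Ok.single (by simp [hw.1]) hw.2
      · rw [map_add, evalFS_wrap, evalFS_single, hE, hEw]
        simp only [one_zsmul, List.prod_singleton, List.prod_nil, List.prod_cons, mul_one]
        noncomm_ring
      · rw [map_add, gword_wrap, gword_single, hG, hGw]
        simp only [one_zsmul, List.map_cons, List.map_nil, List.map_singleton,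
          List.prod_cons, List.prod_nil, List.prod_singleton, mul_one]
        rw [← hgc]
        noncomm_ring

lemma absorb_F0 (hmul : ∀ (i j : ℤ) (x y : R), x ∈ F i → y ∈ F j → x * y ∈ F (i + j))
    (hmul0 : ∀ a ∈ F 0, ∀ x ∈ F 1, g (a * x) = g a * g x ∧ g (x * a) = g x * g a)
    {l : List R} (hl : ∀ x ∈ l, x ∈ F 1) {b : R} (hbl : b ∈ l) (hb : b ∈ F 0)
    (hlen : 2 ≤ l.length) :
    ∃ s : FormalSum R, (∀ m ∈ s.support, m.length + 1 = l.length ∧ ∀ x ∈ m, x ∈ F 1) ∧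
      evalFS R s = l.prod ∧ gword g s = (l.map g).prod := by
  classical
  obtain ⟨p, q, rfl⟩ := List.append_of_mem hbl
  rcases q with _ | ⟨c, q'⟩
  · -- the `F 0` letter is last; absorb it into the previous letter
    have hp : p ≠ [] := by
      intro h
      subst h
      simp at hlen
    obtain ⟨p', d, rfl⟩ := (List.eq_nil_or_concat p).resolve_left hp
    have hd : d ∈ F 1 := hl d (by simp)
    have hdb : d * b ∈ F 1 := by
      have := hmul 1 0 d b hd hb
      norm_num at this
      exact this
    refine ⟨Finsupp.single (p' ++ [d * b]) 1, ?_, ?_, ?_⟩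
    · intro m hm
      rcases Finset.mem_singleton.1 (Finsupp.support_single_subset hm) with rfl
      refine ⟨by simp only [List.concat_eq_append, List.length_append,
        List.length_cons, List.length_nil]; try omega
        , ?_⟩
      intro x hx
      rcases List.mem_append.1 hx with hx | hx
      · exact hl x (by simp [hx])
      · rcases List.mem_singleton.1 hx with rfl
        exact hdb
    · rw [evalFS_single]
      simp only [one_zsmul, List.concat_eq_append, List.prod_append, List.prod_cons,
        List.prod_nil, mul_one]
      noncomm_ring
    · rw [gword_single]
      have := (hmul0 b hb d hd).2
      simp only [one_zsmul, List.concat_eq_append, List.map_append, List.map_cons,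
        List.map_nil, List.prod_append, List.prod_cons, List.prod_nil, mul_one, this]
      noncomm_ring
  · -- absorb the `F 0` letter into the next letter
    have hc : c ∈ F 1 := hl c (by simp)
    have hbc : b * c ∈ F 1 := by
      have := hmul 0 1 b c hb hc
      norm_num at this
      exact this
    refine ⟨Finsupp.single (p ++ (b * c) :: q') 1, ?_, ?_, ?_⟩
    · intro m hm
      rcases Finset.mem_singleton.1 (Finsupp.support_single_subset hm) with rfl
      refine ⟨by simp only [List.length_append, List.length_cons]; try omega
        , ?_⟩
      intro x hx
      rcases List.mem_append.1 hx with hx | hx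
      · exact hl x (by simp [hx])
      · rcases List.mem_cons.1 hx with rfl | hx
        · exact hbc
        · exact hl x (by simp [hx])
    · rw [evalFS_single]
      simp only [one_zsmul, List.prod_append, List.prod_cons]
      noncomm_ring
    · rw [gword_single]
      have := (hmul0 b hb c hc).1
      simp only [one_zsmul, List.map_append, List.map_cons,
        List.prod_append, List.prod_cons, this]
      noncomm_ring

lemma reduce_trivial (hmono : Monotone F)
    (hmul : ∀ (i j : ℤ) (x y : R), x ∈ F i → y ∈ F j → x * y ∈ F (i + j))
    (hgr : ∀ (i j : ℤ) (x y : R), x ∈ F i → y ∈ F j → x * y - y * x ∈ F (i + j - 1))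
    (hadd : ∀ x ∈ F 1, ∀ y ∈ F 1, g (x + y) = g x + g y)
    (hmul0 : ∀ a ∈ F 0, ∀ x ∈ F 1, g (a * x) = g a * g x ∧ g (x * a) = g x * g a)
    (hcomm : ∀ x ∈ F 1, ∀ y ∈ F 1, g x * g y - g y * g x = g (x * y - y * x))
    (N : ℕ) (hN : 2 ≤ N) {t : FormalSum R} (ht : t ∈ trivialRelations F N) :
    ∃ s : FormalSum R, (∀ m ∈ s.support, m.length + 1 ≤ N ∧ ∀ x ∈ m, x ∈ F 1) ∧
      evalFS R s = evalFS R t ∧ gword g s = gword g t := by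
  classical
  induction ht using AddSubgroup.closure_induction with
  | mem u hu =>
      rcases hu with ⟨l, hword, ⟨b, hbl, hb⟩, rfl⟩ | ⟨l, l', hword, hperm, rfl⟩ |
        ⟨l₁, l₂, x, y, hx, hy, hword, rfl⟩ | ⟨l₁, l₂, l₃, a, x, y, ha, hx, hy, hword, rfl⟩
      · obtain ⟨s, hs, hE, hG⟩ :=
          absorb_F0 (g := g) hmul hmul0 hword.2 hbl hb (hword.1 ▸ hN)
        refine ⟨s, ?_, ?_, ?_⟩
        · exact fun m hm => ⟨le_of_eq (hword.1 ▸ (hs m hm).1), (hs m hm).2⟩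
        · rw [hE, evalFS_single, one_zsmul]
        · rw [hG, gword_single, one_zsmul]
      · obtain ⟨s, hs, hE, hG⟩ := perm_reduce hmono hgr hcomm hperm hword.2
        refine ⟨s, ?_, ?_, ?_⟩
        · exact fun m hm =>
            ⟨by have h1 := (hs m hm).1; have h2 := hword.1; omega, (hs m hm).2⟩
        · rw [hE, map_sub, evalFS_single, evalFS_single, one_zsmul, one_zsmul]
        · rw [hG, map_sub, gword_single, gword_single, one_zsmul, one_zsmul]
      · refine ⟨0, by simp, ?_, ?_⟩
        · rw [map_sub, map_sub, evalFS_single, evalFS_single, evalFS_single, map_zero]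
          simp only [one_zsmul, List.prod_append, List.prod_cons, List.prod_nil, mul_one]
          noncomm_ring
        · rw [map_sub, map_sub, gword_single, gword_single, gword_single, map_zero]
          have := hadd x hx y hy
          simp only [one_zsmul, List.map_append, List.map_cons, List.map_nil,
            List.prod_append, List.prod_cons, List.prod_nil, mul_one, this]
          noncomm_ring
      · have hl₁ : ∀ z ∈ l₁, z ∈ F 1 := fun z hz => hword.2 z (by simp [hz])
        have hl₂ : ∀ z ∈ l₂, z ∈ F 1 := fun z hz => hword.2 z (by simp [hz])
        have hl₃ : ∀ z ∈ l₃, z ∈ F 1 := fun z hz => hword.2 z (by simp [hz])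
        have hm : ∀ z ∈ x :: l₂, z ∈ F 1 := by
          intro z hz
          rcases List.mem_cons.1 hz with rfl | hz
          exacts [hx, hl₂ z hz]
        obtain ⟨sm, hsm, hEm, hGm⟩ :=
          move_absorb hmono hmul hgr hcomm hmul0 ha hy (x :: l₂) hm
        refine ⟨Finsupp.mapDomain (fun w => l₁ ++ w ++ l₃) sm, ?_, ?_, ?_⟩
        · intro m hmem
          obtain ⟨w, hw, hmw⟩ := Finset.mem_image.1 (Finsupp.mapDomain_support hmem)
          subst hmw
          have hlen := (hsm w hw).1
          have hNe := hword.1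
          simp only [List.length_append, List.length_cons, List.length_nil] at hNe hlen ⊢
          constructor
          · omega
          · intro z hz
            simp only [List.mem_append] at hz
            rcases hz with (hz | hz) | hz
            exacts [hl₁ z hz, (hsm w hw).2 z hz, hl₃ z hz]
        · rw [evalFS_wrap, hEm, map_sub, evalFS_single, evalFS_single]
          simp only [one_zsmul, List.prod_append, List.prod_cons, List.prod_nil, mul_one]
          noncomm_ring
        · rw [gword_wrap, hGm, map_sub, gword_single, gword_single]
          have h1 := (hmul0 a ha x hx).1
          have h2 := (hmul0 a ha y hy).1
          simp only [one_zsmul, List.map_append, List.map_cons, List.map_nil,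
            List.prod_append, List.prod_cons, List.prod_nil, mul_one, h1, h2]
          noncomm_ring
  | zero => exact ⟨0, by simp, by simp, by simp⟩
  | add u v hu hv ihu ihv =>
      obtain ⟨s, hs, hE, hG⟩ := ihu
      obtain ⟨s', hs', hE', hG'⟩ := ihv
      refine ⟨s + s', ?_, by rw [map_add, map_add, hE, hE'], by rw [map_add, map_add, hG, hG']⟩
      intro m hm
      rcases Finset.mem_union.1 (Finsupp.support_add hm) with h1 | h1
      exacts [hs m h1, hs' m h1]
  | neg u hu ihu =>
      obtain ⟨s, hs, hE, hG⟩ := ihu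
      refine ⟨-s, ?_, by rw [map_neg, map_neg, hE], by rw [map_neg, map_neg, hG]⟩
      intro m hm
      rw [Finsupp.support_neg] at hm
      exact hs m hm

end Reduce

section Assemble
variable {F : ℤ → AddSubgroup R} {g : R → A}

lemma mem_degreePart_of_support {k : ℕ} {t : FormalSum R}
    (h : ∀ l ∈ t.support, word F k l) : t ∈ degreePart F k := by
  classical
  have ht : t = ∑ l ∈ t.support, Finsupp.single l (t l) := (Finsupp.sum_single t).symm
  rw [ht]
  refine AddSubgroup.sum_mem _ fun l hl => ?_
  have h1 : Finsupp.single l (t l) = (t l) • Finsupp.single l (1 : ℤ) := by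
    rw [Finsupp.smul_single, smul_eq_mul, mul_one]
  rw [h1]
  refine AddSubgroup.zsmul_mem _ (AddSubgroup.subset_closure ?_) _
  exact show ∃ m, word F k m ∧ Finsupp.single l (1 : ℤ) = Finsupp.single m 1 from
    ⟨l, h l hl, rfl⟩

lemma support_of_mem_degreePart {k : ℕ} {t : FormalSum R}
    (h : t ∈ degreePart F k) : ∀ l ∈ t.support, word F k l := by
  classical
  induction h using AddSubgroup.closure_induction with
  | mem u hu =>
      rcases hu with ⟨l, hw, rfl⟩
      intro m hm
      rcases Finset.mem_singleton.1 (Finsupp.support_single_subset hm) with rfl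
      exact hw
  | zero => simp
  | add u v _ _ ihu ihv =>
      intro m hm
      rcases Finset.mem_union.1 (Finsupp.support_add hm) with h1 | h1
      exacts [ihu m h1, ihv m h1]
  | neg u _ ihu =>
      intro m hm
      rw [Finsupp.support_neg] at hm
      exact ihu m hm

lemma main_vanish (hmono : Monotone F) (hone : (1 : R) ∈ F 0)
    (hmul : ∀ (i j : ℤ) (x y : R), x ∈ F i → y ∈ F j → x * y ∈ F (i + j))
    (hgr : ∀ (i j : ℤ) (x y : R), x ∈ F i → y ∈ F j → x * y - y * x ∈ F (i + j - 1))
    (hSymInj : ∀ k : ℕ, ∀ t ∈ degreePart F k,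
      evalFS R t ∈ F ((k : ℤ) - 1) → t ∈ trivialRelations F k)
    (hadd : ∀ x ∈ F 1, ∀ y ∈ F 1, g (x + y) = g x + g y) (hg1 : g 1 = 1)
    (hmul0 : ∀ a ∈ F 0, ∀ x ∈ F 1, g (a * x) = g a * g x ∧ g (x * a) = g x * g a)
    (hcomm : ∀ x ∈ F 1, ∀ y ∈ F 1, g x * g y - g y * g x = g (x * y - y * x)) :
    ∀ (n : ℕ) (t : FormalSum R), Ok F n t → evalFS R t = 0 → gword g t = 0 := by
  classical
  intro n
  induction n with
  | zero =>
      intro t ht hE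
      rw [(base_case hadd hmono hone hg1 t (ht.mono (by norm_num))).2, hE, g_zero hadd]
  | succ n ih =>
      intro t ht hE
      rcases Nat.eq_zero_or_pos n with rfl | hn
      · rw [(base_case hadd hmono hone hg1 t ht).2, hE, g_zero hadd]
      set p : List R → Prop := fun l => l.length = n + 1 with hp
      set t1 := Finsupp.filter p t with ht1
      set t2 := Finsupp.filter (fun l => ¬ p l) t with ht2
      have hsplit : t1 + t2 = t := Finsupp.filter_pos_add_filter_neg t p
      have hsup1 : ∀ l ∈ t1.support, l ∈ t.support ∧ p l := by
        intro l hl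
        rw [ht1, Finsupp.support_filter, Finset.mem_filter] at hl
        exact hl
      have hsup2 : ∀ l ∈ t2.support, l ∈ t.support ∧ ¬ p l := by
        intro l hl
        rw [ht2, Finsupp.support_filter, Finset.mem_filter] at hl
        exact hl
      have hdeg : t1 ∈ degreePart F (n + 1) := by
        refine mem_degreePart_of_support fun l hl => ?_
        exact show l.length = n + 1 ∧ ∀ x ∈ l, x ∈ F 1 from
          ⟨(hsup1 l hl).2, (ht l (hsup1 l hl).1).2⟩
      have hok2 : Ok F n t2 := by
        intro l hl
        have h1 := ht l (hsup2 l hl).1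
        have h2 := (hsup2 l hl).2
        exact ⟨by simp only [hp] at h2; omega, h1.2⟩
      have hEt2 : evalFS R t2 ∈ F ((n + 1 : ℕ) - 1 : ℤ) := by
        refine eval_mem_F hmono hone hmul _ t2 fun l hl => ?_
        refine ⟨?_, (hok2 l hl).2⟩
        have := (hok2 l hl).1
        push_cast
        omega
      have hEt1 : evalFS R t1 ∈ F ((n + 1 : ℕ) - 1 : ℤ) := by
        have : evalFS R t1 = -evalFS R t2 := by
          have := congrArg (evalFS R) hsplit
          rw [map_add, hE] at this
          exact eq_neg_of_add_eq_zero_left this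
        rw [this]
        exact neg_mem hEt2
      have htriv := hSymInj (n + 1) t1 hdeg hEt1
      obtain ⟨s, hs, hEs, hGs⟩ := reduce_trivial hmono hmul hgr hadd hmul0 hcomm
        (n + 1) (by omega) htriv
      have hoks : Ok F n s := fun m hm => ⟨by have := (hs m hm).1; omega, (hs m hm).2⟩
      have hE' : evalFS R (s + t2) = 0 := by
        rw [map_add, hEs]
        have := congrArg (evalFS R) hsplit
        rw [map_add] at this
        rw [this, hE]
      have hG' := ih (s + t2) (Ok.add hoks hok2) hE'
      have := congrArg (gword g) hsplit
      rw [map_add] at this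
      rw [map_add, hGs] at hG'
      rw [← this, ← hG']

lemma exists_rep (hmono : Monotone F) (hone : (1 : R) ∈ F 0)
    (hneg : ∀ k : ℤ, k < 0 → F k = ⊥)
    (hSymSurj : ∀ k : ℕ, ∀ x ∈ F (k : ℤ), ∃ t ∈ degreePart F k,
      x - evalFS R t ∈ F ((k : ℤ) - 1)) :
    ∀ (k : ℤ), ∀ x ∈ F k, ∃ t : FormalSum R,
      (∀ l ∈ t.support, ∀ z ∈ l, z ∈ F 1) ∧ evalFS R t = x := by
  classical
  have key : ∀ k : ℤ, -1 ≤ k → ∀ x ∈ F k, ∃ t : FormalSum R,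
      (∀ l ∈ t.support, ∀ z ∈ l, z ∈ F 1) ∧ evalFS R t = x := by
    intro k
    refine Int.le_induction (motive := fun k _ => ∀ x ∈ F k, ∃ t : FormalSum R,
      (∀ l ∈ t.support, ∀ z ∈ l, z ∈ F 1) ∧ evalFS R t = x) ?_ ?_ k
    · intro x hx
      rw [hneg (-1) (by norm_num)] at hx
      rcases AddSubgroup.mem_bot.1 hx with rfl
      exact ⟨0, by simp, by simp⟩
    · intro k hk ihk x hx
      have hk0 : (0 : ℤ) ≤ k + 1 := by omega
      set m := (k + 1).toNat with hm
      have hmk : (m : ℤ) = k + 1 := Int.toNat_of_nonneg hk0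
      obtain ⟨t, htdeg, htx⟩ := hSymSurj m x (by rw [hmk]; exact hx)
      have h1 : x - evalFS R t ∈ F k := by
        have h2 : ((m : ℤ) - 1) = k := by omega
        rwa [h2] at htx
      obtain ⟨t', ht', hE'⟩ := ihk _ h1
      refine ⟨t + t', ?_, by rw [map_add, hE']; abel⟩
      intro l hl
      rcases Finset.mem_union.1 (Finsupp.support_add hl) with h2 | h2
      · exact (support_of_mem_degreePart htdeg l h2).2
      · exact ht' l h2
  intro k x hx
  rcases le_or_gt (-1) k with h | h
  · exact key k h x hx
  · exact key (-1) le_rfl x (hmono (by omega) hx)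

/-- ring homomorphisms agreeing with `g` on `F 1` evaluate words by `gword`. -/
lemma ringhom_eval (Ψ : R →+* A) (hΨ : ∀ x ∈ F 1, Ψ x = g x) {t : FormalSum R}
    (ht : ∀ l ∈ t.support, ∀ z ∈ l, z ∈ F 1) :
    Ψ (evalFS R t) = gword g t := by
  classical
  have prodeq : ∀ l : List R, (∀ z ∈ l, z ∈ F 1) → Ψ l.prod = (l.map g).prod := by
    intro l
    induction l with
    | nil => intro _; simp
    | cons z l ihl =>
        intro hl
        rw [List.prod_cons, map_mul, ihl (fun z hz => hl z (by simp [hz])),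
          hΨ z (hl z (by simp)), List.map_cons, List.prod_cons]
  induction t using Finsupp.induction with
  | zero => simp
  | single_add l c u hlu hc ihu =>
      have hsub : (Finsupp.single l c + u).support = insert l u.support := by
        rw [Finsupp.support_add_eq, Finsupp.support_single_ne_zero _ hc, Finset.insert_eq]
        rw [Finsupp.support_single_ne_zero _ hc]
        simpa using hlu
      have hl : ∀ z ∈ l, z ∈ F 1 := ht l (by rw [hsub]; simp)
      have hu : ∀ m ∈ u.support, ∀ z ∈ m, z ∈ F 1 := fun m hm => ht m (by rw [hsub]; simp [hm])
      rw [map_add, map_add, map_add, ihu hu, evalFS_single, gword_single,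
        map_zsmul, prodeq l hl]

end Assemble

section Mul
variable {F : ℤ → AddSubgroup R} {g : R → A}

/-- The product of two formal sums of words (concatenation of words). -/
def mulFS (t t' : FormalSum R) : FormalSum R :=
  t.sum fun l c => c • Finsupp.mapDomain (fun w => l ++ w ++ []) t'

lemma mulFS_eval (t t' : FormalSum R) :
    evalFS R (mulFS t t') = evalFS R t * evalFS R t' := by
  classical
  induction t using Finsupp.induction with
  | zero => rw [mulFS, Finsupp.sum_zero_index, map_zero]; exact (zero_mul _).symm
  | single_add l c u hlu hc ih =>
      have h0 : ∀ m : List R,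
          (0 : ℤ) • Finsupp.mapDomain (fun w => m ++ w ++ []) t' = 0 :=
        fun _ => zero_smul _ _
      have hac : ∀ (m : List R) (c₁ c₂ : ℤ),
          (c₁ + c₂) • Finsupp.mapDomain (fun w => m ++ w ++ []) t'
            = c₁ • Finsupp.mapDomain (fun w => m ++ w ++ []) t'
              + c₂ • Finsupp.mapDomain (fun w => m ++ w ++ []) t' :=
        fun m c₁ c₂ => add_smul _ _ _
      rw [mulFS, Finsupp.sum_add_index' h0 hac, Finsupp.sum_single_index (h0 l), map_add,
        ← mulFS, ih, map_add, map_zsmul, evalFS_wrap, evalFS_single]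
      simp only [List.prod_nil, mul_one, smul_mul_assoc, add_mul]

lemma mulFS_gword (t t' : FormalSum R) :
    gword g (mulFS t t') = gword g t * gword g t' := by
  classical
  induction t using Finsupp.induction with
  | zero => rw [mulFS, Finsupp.sum_zero_index, map_zero]; exact (zero_mul _).symm
  | single_add l c u hlu hc ih =>
      have h0 : ∀ m : List R,
          (0 : ℤ) • Finsupp.mapDomain (fun w => m ++ w ++ []) t' = 0 :=
        fun _ => zero_smul _ _
      have hac : ∀ (m : List R) (c₁ c₂ : ℤ),
          (c₁ + c₂) • Finsupp.mapDomain (fun w => m ++ w ++ []) t'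
            = c₁ • Finsupp.mapDomain (fun w => m ++ w ++ []) t'
              + c₂ • Finsupp.mapDomain (fun w => m ++ w ++ []) t' :=
        fun m c₁ c₂ => add_smul _ _ _
      rw [mulFS, Finsupp.sum_add_index' h0 hac, Finsupp.sum_single_index (h0 l), map_add,
        ← mulFS, ih, map_add, map_zsmul, gword_wrap, gword_single]
      simp only [List.map_nil, List.prod_nil, mul_one, smul_mul_assoc, add_mul]

lemma mulFS_letters {t t' : FormalSum R}
    (h : ∀ l ∈ t.support, ∀ z ∈ l, z ∈ F 1) (h' : ∀ l ∈ t'.support, ∀ z ∈ l, z ∈ F 1) :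
    ∀ l ∈ (mulFS t t').support, ∀ z ∈ l, z ∈ F 1 := by
  classical
  intro m hm
  have h1 := Finsupp.support_sum hm
  rcases Finset.mem_biUnion.1 h1 with ⟨l, hl, hml⟩
  have h2 := Finsupp.support_smul hml
  obtain ⟨w, hw, hmw⟩ := Finset.mem_image.1 (Finsupp.mapDomain_support h2)
  subst hmw
  intro z hz
  simp only [List.append_nil, List.mem_append] at hz
  rcases hz with hz | hz
  exacts [h l hl z hz, h' w hw z hz]

end Mul

end PBW


/-- Converse of the Poincaré–Birkhoff–Witt theorem.  Let `R` be a ring with an exhaustive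
increasing filtration `F` (with `F k = ⊥` for `k < 0`, `1 ∈ F 0`, `Fᵢ·Fⱼ ⊆ F_{i+j}`) whose
associated graded ring is commutative (commutators drop the degree by one).  Assume the
canonical map `Sym_{R₀}(R₁/R₀) → Gr(R)` is an isomorphism, expressed degreewise:
(surjectivity) every element of `F k` is, modulo `F (k-1)`, the value of a formal sum of
`k`-letter words in `R₁`; (injectivity) a formal sum of `k`-letter words whose value lies in
`F (k-1)` is a trivial relation.  Then the canonical surjection `φ : T_{R₀}(R₁)/J → R` is an
isomorphism, where `J` is the two-sided ideal generated by `a - i(a)` (`a ∈ R₀`) and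
`i(x)⊗i(y) - i(y)⊗i(x) - i([x,y])` (`x, y ∈ R₁`).  This is expressed by the universal
property of `T_{R₀}(R₁)/J`: every additive map `g` on `R₁` into a ring `A` with `g 1 = 1`,
multiplicative with respect to `R₀`-factors, and sending commutators to commutators, extends
uniquely to a ring homomorphism `R →+* A`. -/
theorem pbw_converse {R : Type*} [Ring R] (F : ℤ → AddSubgroup R)
    (hmono : Monotone F)
    (hneg : ∀ k : ℤ, k < 0 → F k = ⊥)
    (hone : (1 : R) ∈ F 0)
    (hmul : ∀ (i j : ℤ) (x y : R), x ∈ F i → y ∈ F j → x * y ∈ F (i + j))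
    (hexh : ∀ x : R, ∃ k : ℤ, x ∈ F k)
    (hgr : ∀ (i j : ℤ) (x y : R), x ∈ F i → y ∈ F j → x * y - y * x ∈ F (i + j - 1))
    (hSymSurj : ∀ k : ℕ, ∀ x ∈ F (k : ℤ), ∃ t ∈ degreePart F k,
      x - evalFS R t ∈ F ((k : ℤ) - 1))
    (hSymInj : ∀ k : ℕ, ∀ t ∈ degreePart F k,
      evalFS R t ∈ F ((k : ℤ) - 1) → t ∈ trivialRelations F k) :
    ∀ (A : Type*) [Ring A], ∀ g : R → A,
      (∀ x ∈ F 1, ∀ y ∈ F 1, g (x + y) = g x + g y) →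
      g 1 = 1 →
      (∀ a ∈ F 0, ∀ x ∈ F 1, g (a * x) = g a * g x ∧ g (x * a) = g x * g a) →
      (∀ x ∈ F 1, ∀ y ∈ F 1, g x * g y - g y * g x = g (x * y - y * x)) →
      ∃! Φ : R →+* A, ∀ x ∈ F 1, Φ x = g x := by
  classical
  intro A _ g hadd hg1 hmul0 hcomm
  have hone1 : (1 : R) ∈ F 1 := hmono (by norm_num) hone
  have hrep : ∀ x : R, ∃ t : FormalSum R,
      (∀ l ∈ t.support, ∀ z ∈ l, z ∈ F 1) ∧ evalFS R t = x := by
    intro x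
    obtain ⟨k, hk⟩ := hexh x
    exact exists_rep hmono hone hneg hSymSurj k x hk
  choose T hT1 hT2 using hrep
  have wd : ∀ t t' : FormalSum R, (∀ l ∈ t.support, ∀ z ∈ l, z ∈ F 1) →
      (∀ l ∈ t'.support, ∀ z ∈ l, z ∈ F 1) → evalFS R t = evalFS R t' →
      gword g t = gword g t' := by
    intro t t' h h' hEq
    have hsupsub : (t - t').support ⊆ t.support ∪ t'.support := by
      intro l hl
      rw [sub_eq_add_neg] at hl
      rcases Finset.mem_union.1 (Finsupp.support_add hl) with h1 | h1
      · exact Finset.mem_union_left _ h1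
      · rw [Finsupp.support_neg] at h1
        exact Finset.mem_union_right _ h1
    set n := ((t - t').support.sup List.length) with hn
    have hok : Ok F n (t - t') := by
      intro l hl
      refine ⟨Finset.le_sup hl, ?_⟩
      rcases Finset.mem_union.1 (hsupsub hl) with h1 | h1
      exacts [h l h1, h' l h1]
    have h0 : evalFS R (t - t') = 0 := by rw [map_sub, hEq, sub_self]
    have hv := main_vanish hmono hone hmul hgr hSymInj hadd hg1 hmul0 hcomm n (t - t') hok h0
    rw [map_sub] at hv
    exact sub_eq_zero.1 hv
  have key : ∀ (x : R) (t : FormalSum R), (∀ l ∈ t.support, ∀ z ∈ l, z ∈ F 1) →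
      evalFS R t = x → gword g (T x) = gword g t := by
    intro x t h hEq
    exact wd (T x) t (hT1 x) h (by rw [hT2 x, hEq])
  have hsingle_letters : ∀ x ∈ F 1,
      ∀ l ∈ (Finsupp.single [x] (1 : ℤ)).support, ∀ z ∈ l, z ∈ F 1 := by
    intro x hx l hl
    rcases Finset.mem_singleton.1 (Finsupp.support_single_subset hl) with rfl
    intro z hz
    rcases List.mem_singleton.1 hz with rfl
    exact hx
  refine ⟨{ toFun := fun x => gword g (T x)
            map_one' := ?_
            map_mul' := ?_
            map_zero' := ?_
            map_add' := ?_ }, ?_, ?_⟩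
  · show gword g (T 1) = 1
    have h1 : gword g (T 1) = gword g (Finsupp.single ([] : List R) (1 : ℤ)) := by
      refine key 1 _ ?_ ?_
      · intro l hl
        rcases Finset.mem_singleton.1 (Finsupp.support_single_subset hl) with rfl
        simp
      · rw [evalFS_single]; simp
    rw [h1, gword_single]
    simp
  · intro x y
    show gword g (T (x * y)) = gword g (T x) * gword g (T y)
    have h1 : gword g (T (x * y)) = gword g (mulFS (T x) (T y)) := by
      refine key (x * y) _ (mulFS_letters (hT1 x) (hT1 y)) ?_
      rw [mulFS_eval, hT2, hT2]
    rw [h1, mulFS_gword]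
  · show gword g (T 0) = 0
    have h1 : gword g (T 0) = gword g (0 : FormalSum R) := by
      refine key 0 0 (by simp) (by simp)
    rw [h1, map_zero]
  · intro x y
    show gword g (T (x + y)) = gword g (T x) + gword g (T y)
    have h1 : gword g (T (x + y)) = gword g (T x + T y) := by
      refine key (x + y) _ ?_ ?_
      · intro l hl
        rcases Finset.mem_union.1 (Finsupp.support_add hl) with h1 | h1
        exacts [hT1 x l h1, hT1 y l h1]
      · rw [map_add, hT2, hT2]
    rw [h1, map_add]
  · intro x hx
    show gword g (T x) = g x
    have h1 : gword g (T x) = gword g (Finsupp.single [x] (1 : ℤ)) := by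
      refine key x _ (hsingle_letters x hx) ?_
      rw [evalFS_single]; simp
    rw [h1, gword_single]
    simp
  · intro Ψ hΨ
    ext x
    show Ψ x = gword g (T x)
    calc Ψ x = Ψ (evalFS R (T x)) := by rw [hT2 x]
    _ = gword g (T x) := ringhom_eval Ψ hΨ (hT1 x)

end
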